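/- (Case 1 time-shift estimate, from the proof of Theorem 6.2.) For every h with 0 < h ≤ Δt, the time-shifted piecewise constant function satisfies ∫_h^T ‖v(t−h) − v(t)‖² dt ≤ h · Σ_{j=1}^{N−1} ‖v^{j+1} − v^j‖². -/

import Mathlib

open MeasureTheory Filter

/-- Case 1 time-shift estimate (proof of Theorem 6.2): for `0 < h ≤ Δt`,
`∫_h^T ‖v(t-h) - v(t)‖² dt ≤ h · Σ_{j=1}^{N-1} ‖v^{j+1} - v^j‖²`,
where `v` is the piecewise constant function with `v(t) = v^j` on `((j-1)Δt, jΔt]`. -/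
theorem stmt_0 {E : Type*} [NormedAddCommGroup E]
    (T : ℝ) (hT : 0 < T) (N : ℕ) (hN : 0 < N)
    (Δt : ℝ) (hΔt : Δt = T / N)
    (vs : ℕ → E) (v : ℝ → E)
    (hv : ∀ j ∈ Finset.Icc 1 N, ∀ t ∈ Set.Ioc (((j : ℝ) - 1) * Δt) ((j : ℝ) * Δt),
      v t = vs j)
    (h : ℝ) (hh : 0 < h) (hhΔt : h ≤ Δt) :
    ∫ t in Set.Ioc h T, ‖v (t - h) - v t‖ ^ 2
      ≤ h * ∑ j ∈ Finset.Icc 1 (N - 1), ‖vs (j + 1) - vs j‖ ^ 2 := by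
  have hNR : (0:ℝ) < N := Nat.cast_pos.mpr hN
  have hΔt0 : 0 < Δt := by rw [hΔt]; positivity
  have hTN : T = N * Δt := by rw [hΔt]; field_simp
  set c : ℕ → ℝ := fun j => ‖vs (j+1) - vs j‖ ^ 2 with hc
  set g : ℝ → ℝ := fun t => ∑ j ∈ Finset.Icc 1 (N-1),
    (Set.Ioc ((j:ℝ)*Δt) ((j:ℝ)*Δt + h)).indicator (fun _ => c j) t with hg
  have key : Set.EqOn (fun t => ‖v (t-h) - v t‖^2) g (Set.Ioc h T) := by
    rintro t ⟨ht1, ht2⟩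
    have htpos : 0 < t := hh.trans ht1
    set j : ℕ := ⌈t / Δt⌉₊ with hj
    have hj1 : 1 ≤ j := by
      have : 0 < t / Δt := div_pos htpos hΔt0
      exact Nat.ceil_pos.mpr this
    have hjN : j ≤ N := by
      apply Nat.ceil_le.mpr
      rw [div_le_iff₀ hΔt0]
      rw [hTN] at ht2; exact ht2
    have hlt : ((j:ℝ) - 1) * Δt < t := by
      have h1 : (j - 1 : ℕ) < j := by omega
      have h2 : ((j - 1 : ℕ) : ℝ) < t / Δt := Nat.lt_ceil.mp h1
      have h3 : ((j - 1 : ℕ) : ℝ) = (j:ℝ) - 1 := by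
        push_cast [Nat.cast_sub hj1]; ring
      rw [h3] at h2
      calc ((j:ℝ) - 1) * Δt < (t / Δt) * Δt := by
            exact mul_lt_mul_of_pos_right h2 hΔt0
        _ = t := by field_simp
    have hle : t ≤ (j:ℝ) * Δt := by
      have := Nat.le_ceil (t / Δt)
      calc t = (t / Δt) * Δt := by field_simp
        _ ≤ (j:ℝ) * Δt := mul_le_mul_of_nonneg_right this hΔt0.le
    have hvt : v t = vs j := hv j (Finset.mem_Icc.mpr ⟨hj1, hjN⟩) t ⟨hlt, hle⟩
    by_cases hcase : t ≤ ((j:ℝ) - 1) * Δt + h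
    · -- Case A : t in the first h-piece of the j-th interval, j ≥ 2
      have hj2 : 2 ≤ j := by
        by_contra hcon
        have hj1' : j = 1 := by omega
        rw [hj1'] at hcase
        push_cast at hcase
        simp at hcase
        linarith
      have hjm1 : ((j - 1 : ℕ) : ℝ) = (j:ℝ) - 1 := by
        push_cast [Nat.cast_sub hj1]; ring
      have hvth : v (t - h) = vs (j - 1) := by
        apply hv (j-1) (Finset.mem_Icc.mpr ⟨by omega, by omega⟩)
        constructor
        · rw [hjm1]
          have : ((j:ℝ) - 1 - 1) * Δt = ((j:ℝ) - 1) * Δt - Δt := by ring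
          rw [this]
          linarith
        · rw [hjm1]; linarith
      have hmem : t ∈ Set.Ioc (((j-1 : ℕ):ℝ)*Δt) (((j-1 : ℕ):ℝ)*Δt + h) := by
        rw [hjm1]; exact ⟨hlt, hcase⟩
      have hsum : g t = c (j-1) := by
        have hgt : g t = ∑ k ∈ Finset.Icc 1 (N-1),
            (Set.Ioc ((k:ℝ)*Δt) ((k:ℝ)*Δt + h)).indicator (fun _ => c k) t := rfl
        rw [hgt]
        rw [Finset.sum_eq_single_of_mem (j-1) (Finset.mem_Icc.mpr ⟨by omega, by omega⟩)]
        · exact Set.indicator_of_mem hmem _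
        · intro k hk hkj
          apply Set.indicator_of_notMem
          rintro ⟨hk1, hk2⟩
          rw [Finset.mem_Icc] at hk
          rcases lt_or_ge k (j-1) with hko | hko
          · have hkle : (k:ℝ) ≤ (j:ℝ) - 2 := by
              have : (k:ℕ) + 2 ≤ j := by omega
              have := (Nat.cast_le (α := ℝ)).mpr this
              push_cast at this; linarith
            have : (k:ℝ)*Δt + h ≤ ((j:ℝ)-1)*Δt := by nlinarith
            linarith
          · have hjk : j ≤ k := by omega
            have : (j:ℝ) ≤ (k:ℝ) := Nat.cast_le.mpr hjk
            have : (j:ℝ)*Δt ≤ (k:ℝ)*Δt := by nlinarith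
            linarith
      show ‖v (t - h) - v t‖ ^ 2 = g t
      show ‖v (t - h) - v t‖ ^ 2 = g t
      rw [hsum, hvt, hvth]
      simp only [hc]
      have : (j - 1) + 1 = j := by omega
      rw [this, norm_sub_rev]
    · -- Case B : integrand vanishes
      push_neg at hcase
      have hvth : v (t - h) = vs j := by
        apply hv j (Finset.mem_Icc.mpr ⟨hj1, hjN⟩)
        constructor
        · linarith
        · linarith
      have hsum : g t = 0 := by
        have hgt : g t = ∑ k ∈ Finset.Icc 1 (N-1),
            (Set.Ioc ((k:ℝ)*Δt) ((k:ℝ)*Δt + h)).indicator (fun _ => c k) t := rfl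
        rw [hgt]
        apply Finset.sum_eq_zero
        intro k hk
        apply Set.indicator_of_notMem
        rintro ⟨hk1, hk2⟩
        rw [Finset.mem_Icc] at hk
        rcases lt_or_ge k j with hko | hko
        · have : (k:ℝ) ≤ (j:ℝ) - 1 := by
            have : (k:ℕ) + 1 ≤ j := by omega
            have := (Nat.cast_le (α := ℝ)).mpr this
            push_cast at this; linarith
          have : (k:ℝ)*Δt ≤ ((j:ℝ)-1)*Δt := by nlinarith
          linarith
        · have : (j:ℝ) ≤ (k:ℝ) := Nat.cast_le.mpr hko
          have : (j:ℝ)*Δt ≤ (k:ℝ)*Δt := by nlinarith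
          linarith
      show ‖v (t - h) - v t‖ ^ 2 = g t
      rw [hsum, hvt, hvth]
      simp
  rw [setIntegral_congr_fun measurableSet_Ioc key]
  have hint : ∀ k ∈ Finset.Icc 1 (N-1),
      Integrable ((Set.Ioc ((k:ℝ)*Δt) ((k:ℝ)*Δt + h)).indicator (fun _ => c k)) := by
    intro k _
    apply IntegrableOn.integrable_indicator _ measurableSet_Ioc
    exact (integrableOn_const_iff (by simp)).mpr (Or.inr measure_Ioc_lt_top)
  have hgint : Integrable g := by
    rw [hg]
    exact integrable_finset_sum _ hint
  have hgnonneg : 0 ≤ᵐ[volume] g := by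
    filter_upwards with t
    apply Finset.sum_nonneg
    intro k _
    exact Set.indicator_nonneg (fun _ _ => sq_nonneg _) t
  calc ∫ t in Set.Ioc h T, g t ≤ ∫ t, g t := setIntegral_le_integral hgint hgnonneg
    _ = ∑ k ∈ Finset.Icc 1 (N-1), h * c k := by
        rw [hg, integral_finset_sum _ hint]
        apply Finset.sum_congr rfl
        intro k _
        rw [integral_indicator_const _ measurableSet_Ioc, Real.volume_real_Ioc]
        simp [ENNReal.toReal_ofReal hh.le, hh.le]
    _ = h * ∑ j ∈ Finset.Icc 1 (N - 1), ‖vs (j + 1) - vs j‖ ^ 2 := by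
        rw [Finset.mul_sum]
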